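/- There exists κ > 0, depending only on c1, c2, σ0, σ1, such that for |Φ| < 2κ the genuine-nonlinearity coefficient of the first characteristic field satisfies c¹₁₁(Φ) := ∇λ1(Φ) · r1(Φ) = [2σ0(a−b)(λ1²−b) + (2σ0+6σ1)c²] / (4σ1 λ1 √Δ), and c⁴₄₄(Φ) := ∇λ4(Φ) · r4(Φ) = −c¹₁₁(Φ). In particular, at Φ = 0, c¹₁₁(0) = σ0(c1² − c2²)/(2σ1 c1), which is nonzero whenever σ0σ1 ≠ 0 (genuine nonlinearity of the first and fourth characteristic fields). -/

import Mathlib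

noncomputable section

open Real Matrix Set

namespace ElasticIP

/-- Euclidean norm on `ℝ⁴` (presented as `Fin 4 → ℝ`). -/
def eucNorm4 (Φ : Fin 4 → ℝ) : ℝ := Real.sqrt (∑ i, (Φ i) ^ 2)

/-- `a(Φ) = c₁² + 2σ₀φ₁`. -/
def aF (c1 σ0 : ℝ) (Φ : Fin 4 → ℝ) : ℝ := c1 ^ 2 + 2 * σ0 * Φ 0

/-- `b(Φ) = c₂² + 2σ₁φ₁`. -/
def bF (c2 σ1 : ℝ) (Φ : Fin 4 → ℝ) : ℝ := c2 ^ 2 + 2 * σ1 * Φ 0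

/-- `c(Φ) = 2σ₁φ₂`. -/
def cF (σ1 : ℝ) (Φ : Fin 4 → ℝ) : ℝ := 2 * σ1 * Φ 1

/-- `Δ = (a-b)² + 4c²`. -/
def ΔF (c1 c2 σ0 σ1 : ℝ) (Φ : Fin 4 → ℝ) : ℝ :=
  (aF c1 σ0 Φ - bF c2 σ1 Φ) ^ 2 + 4 * cF σ1 Φ ^ 2

/-- The coefficient matrix `A(Φ)` of the first-order system. -/
def AM (c1 c2 σ0 σ1 : ℝ) (Φ : Fin 4 → ℝ) : Matrix (Fin 4) (Fin 4) ℝ :=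
  !![0, 0, -1, 0;
     0, 0, 0, -1;
     -aF c1 σ0 Φ, -cF σ1 Φ, 0, 0;
     -cF σ1 Φ, -bF c2 σ1 Φ, 0, 0]

/-- `λ₁ = √(((a+b)+√Δ)/2)`. -/
def lam1 (c1 c2 σ0 σ1 : ℝ) (Φ : Fin 4 → ℝ) : ℝ :=
  Real.sqrt ((aF c1 σ0 Φ + bF c2 σ1 Φ + Real.sqrt (ΔF c1 c2 σ0 σ1 Φ)) / 2)

/-- `λ₂ = √(((a+b)-√Δ)/2)`. -/
def lam2 (c1 c2 σ0 σ1 : ℝ) (Φ : Fin 4 → ℝ) : ℝ :=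
  Real.sqrt ((aF c1 σ0 Φ + bF c2 σ1 Φ - Real.sqrt (ΔF c1 c2 σ0 σ1 Φ)) / 2)

/-- `λ₃ = -λ₂`. -/
def lam3 (c1 c2 σ0 σ1 : ℝ) (Φ : Fin 4 → ℝ) : ℝ := - lam2 c1 c2 σ0 σ1 Φ

/-- `λ₄ = -λ₁`. -/
def lam4 (c1 c2 σ0 σ1 : ℝ) (Φ : Fin 4 → ℝ) : ℝ := - lam1 c1 c2 σ0 σ1 Φ

/-- Right eigenvector `r₁`. -/
def r1 (c1 c2 σ0 σ1 : ℝ) (Φ : Fin 4 → ℝ) : Fin 4 → ℝ :=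
  ![(lam1 c1 c2 σ0 σ1 Φ ^ 2 - bF c2 σ1 Φ) / (2 * σ1),
    Φ 1,
    -(lam1 c1 c2 σ0 σ1 Φ * (lam1 c1 c2 σ0 σ1 Φ ^ 2 - bF c2 σ1 Φ)) / (2 * σ1),
    -(lam1 c1 c2 σ0 σ1 Φ) * Φ 1]

/-- Right eigenvector `r₂`. -/
def r2 (c1 c2 σ0 σ1 : ℝ) (Φ : Fin 4 → ℝ) : Fin 4 → ℝ :=
  ![(lam2 c1 c2 σ0 σ1 Φ ^ 2 - bF c2 σ1 Φ) / (2 * σ1),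
    Φ 1,
    -(lam2 c1 c2 σ0 σ1 Φ * (lam2 c1 c2 σ0 σ1 Φ ^ 2 - bF c2 σ1 Φ)) / (2 * σ1),
    -(lam2 c1 c2 σ0 σ1 Φ) * Φ 1]

/-- Right eigenvector `r₃`. -/
def r3 (c1 c2 σ0 σ1 : ℝ) (Φ : Fin 4 → ℝ) : Fin 4 → ℝ :=
  ![(lam2 c1 c2 σ0 σ1 Φ ^ 2 - bF c2 σ1 Φ) / (2 * σ1),
    Φ 1,
    lam2 c1 c2 σ0 σ1 Φ * (lam2 c1 c2 σ0 σ1 Φ ^ 2 - bF c2 σ1 Φ) / (2 * σ1),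
    lam2 c1 c2 σ0 σ1 Φ * Φ 1]

/-- Right eigenvector `r₄`. -/
def r4 (c1 c2 σ0 σ1 : ℝ) (Φ : Fin 4 → ℝ) : Fin 4 → ℝ :=
  ![(lam1 c1 c2 σ0 σ1 Φ ^ 2 - bF c2 σ1 Φ) / (2 * σ1),
    Φ 1,
    lam1 c1 c2 σ0 σ1 Φ * (lam1 c1 c2 σ0 σ1 Φ ^ 2 - bF c2 σ1 Φ) / (2 * σ1),
    lam1 c1 c2 σ0 σ1 Φ * Φ 1]

/-- `K = (Δ + (a-b)√Δ)/(4σ₁²)`. -/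
def KF (c1 c2 σ0 σ1 : ℝ) (Φ : Fin 4 → ℝ) : ℝ :=
  (ΔF c1 c2 σ0 σ1 Φ + (aF c1 σ0 Φ - bF c2 σ1 Φ) * Real.sqrt (ΔF c1 c2 σ0 σ1 Φ)) / (4 * σ1 ^ 2)

/-- `N = (Δ - (a-b)√Δ)/(4σ₁²)`. -/
def NF (c1 c2 σ0 σ1 : ℝ) (Φ : Fin 4 → ℝ) : ℝ :=
  (ΔF c1 c2 σ0 σ1 Φ - (aF c1 σ0 Φ - bF c2 σ1 Φ) * Real.sqrt (ΔF c1 c2 σ0 σ1 Φ)) / (4 * σ1 ^ 2)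

/-- Left eigenvector `l₁`. -/
def l1 (c1 c2 σ0 σ1 : ℝ) (Φ : Fin 4 → ℝ) : Fin 4 → ℝ :=
  (KF c1 c2 σ0 σ1 Φ)⁻¹ •
    ![(lam1 c1 c2 σ0 σ1 Φ ^ 2 - bF c2 σ1 Φ) / (2 * σ1),
      Φ 1,
      -((lam1 c1 c2 σ0 σ1 Φ ^ 2 - bF c2 σ1 Φ) / (2 * σ1 * lam1 c1 c2 σ0 σ1 Φ)),
      -(Φ 1 / lam1 c1 c2 σ0 σ1 Φ)]

/-- Left eigenvector `l₂`. -/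
def l2 (c1 c2 σ0 σ1 : ℝ) (Φ : Fin 4 → ℝ) : Fin 4 → ℝ :=
  (NF c1 c2 σ0 σ1 Φ)⁻¹ •
    ![(lam2 c1 c2 σ0 σ1 Φ ^ 2 - bF c2 σ1 Φ) / (2 * σ1),
      Φ 1,
      -((lam2 c1 c2 σ0 σ1 Φ ^ 2 - bF c2 σ1 Φ) / (2 * σ1 * lam2 c1 c2 σ0 σ1 Φ)),
      -(Φ 1 / lam2 c1 c2 σ0 σ1 Φ)]

/-- Left eigenvector `l₃`. -/
def l3 (c1 c2 σ0 σ1 : ℝ) (Φ : Fin 4 → ℝ) : Fin 4 → ℝ :=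
  (NF c1 c2 σ0 σ1 Φ)⁻¹ •
    ![(lam2 c1 c2 σ0 σ1 Φ ^ 2 - bF c2 σ1 Φ) / (2 * σ1),
      Φ 1,
      (lam2 c1 c2 σ0 σ1 Φ ^ 2 - bF c2 σ1 Φ) / (2 * σ1 * lam2 c1 c2 σ0 σ1 Φ),
      Φ 1 / lam2 c1 c2 σ0 σ1 Φ]

/-- Left eigenvector `l₄`. -/
def l4 (c1 c2 σ0 σ1 : ℝ) (Φ : Fin 4 → ℝ) : Fin 4 → ℝ :=
  (KF c1 c2 σ0 σ1 Φ)⁻¹ •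
    ![(lam1 c1 c2 σ0 σ1 Φ ^ 2 - bF c2 σ1 Φ) / (2 * σ1),
      Φ 1,
      (lam1 c1 c2 σ0 σ1 Φ ^ 2 - bF c2 σ1 Φ) / (2 * σ1 * lam1 c1 c2 σ0 σ1 Φ),
      Φ 1 / lam1 c1 c2 σ0 σ1 Φ]

/-- Indexed eigenvalues `λᵢ`, `i = 1,…,4` realised as `i : Fin 4`. -/
def lamI (c1 c2 σ0 σ1 : ℝ) (i : Fin 4) (Φ : Fin 4 → ℝ) : ℝ :=
  match i with
  | 0 => lam1 c1 c2 σ0 σ1 Φ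
  | 1 => lam2 c1 c2 σ0 σ1 Φ
  | 2 => lam3 c1 c2 σ0 σ1 Φ
  | 3 => lam4 c1 c2 σ0 σ1 Φ

/-- Indexed right eigenvectors `rᵢ`. -/
def rI (c1 c2 σ0 σ1 : ℝ) (i : Fin 4) (Φ : Fin 4 → ℝ) : Fin 4 → ℝ :=
  match i with
  | 0 => r1 c1 c2 σ0 σ1 Φ
  | 1 => r2 c1 c2 σ0 σ1 Φ
  | 2 => r3 c1 c2 σ0 σ1 Φ
  | 3 => r4 c1 c2 σ0 σ1 Φ

/-- Indexed left eigenvectors `lᵢ`. -/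
def lI (c1 c2 σ0 σ1 : ℝ) (i : Fin 4) (Φ : Fin 4 → ℝ) : Fin 4 → ℝ :=
  match i with
  | 0 => l1 c1 c2 σ0 σ1 Φ
  | 1 => l2 c1 c2 σ0 σ1 Φ
  | 2 => l3 c1 c2 σ0 σ1 Φ
  | 3 => l4 c1 c2 σ0 σ1 Φ

/-- Jacobian matrix of a map `ℝ⁴ → ℝ⁴`. -/
def jac (f : (Fin 4 → ℝ) → (Fin 4 → ℝ)) (Φ : Fin 4 → ℝ) : Matrix (Fin 4) (Fin 4) ℝ :=
  fun i j => fderiv ℝ (fun Ψ => f Ψ i) Φ (Pi.single j 1)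

/-- `cⁱᵢₘ(Φ) = ∇λᵢ(Φ) · rₘ(Φ)`. -/
def cCo (c1 c2 σ0 σ1 : ℝ) (i m : Fin 4) (Φ : Fin 4 → ℝ) : ℝ :=
  fderiv ℝ (lamI c1 c2 σ0 σ1 i) Φ (rI c1 c2 σ0 σ1 m Φ)

/-- `γⁱᵢₘ(Φ) = -(λᵢ-λₘ) lᵢ · (Drᵢ rₘ - Drₘ rᵢ)`. -/
def gammaII (c1 c2 σ0 σ1 : ℝ) (i m : Fin 4) (Φ : Fin 4 → ℝ) : ℝ :=
  -(lamI c1 c2 σ0 σ1 i Φ - lamI c1 c2 σ0 σ1 m Φ) *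
    (lI c1 c2 σ0 σ1 i Φ ⬝ᵥ
      (jac (rI c1 c2 σ0 σ1 i) Φ *ᵥ rI c1 c2 σ0 σ1 m Φ -
        jac (rI c1 c2 σ0 σ1 m) Φ *ᵥ rI c1 c2 σ0 σ1 i Φ))

/-- `γⁱₖₘ(Φ) = -(λₖ-λₘ) lᵢ · (Drₖ rₘ)`. -/
def gammaKM (c1 c2 σ0 σ1 : ℝ) (i k m : Fin 4) (Φ : Fin 4 → ℝ) : ℝ :=
  -(lamI c1 c2 σ0 σ1 k Φ - lamI c1 c2 σ0 σ1 m Φ) *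
    (lI c1 c2 σ0 σ1 i Φ ⬝ᵥ (jac (rI c1 c2 σ0 σ1 k) Φ *ᵥ rI c1 c2 σ0 σ1 m Φ))


private lemma abs_le_eucNorm4 (Φ : Fin 4 → ℝ) (i : Fin 4) : |Φ i| ≤ eucNorm4 Φ := by
  unfold eucNorm4
  rw [← Real.sqrt_sq_eq_abs]
  exact Real.sqrt_le_sqrt (Finset.single_le_sum (f := fun j => Φ j ^ 2)
    (fun j _ => sq_nonneg _) (Finset.mem_univ i))

private lemma key_identity (σ0 σ1 A B S L y : ℝ) (hσ1 : σ1 ≠ 0) (hS : S ≠ 0) (hL : L ≠ 0)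
    (hL2 : L ^ 2 = (A + B + S) / 2)
    (hS2 : S ^ 2 = (A - B) ^ 2 + 4 * (2 * σ1 * y) ^ 2) :
    (1 / (2 * L)) *
        (((σ0 + σ1) + (A - B) * (σ0 - σ1) / S) * ((L ^ 2 - B) / (2 * σ1))
          + (4 * σ1 * (2 * σ1 * y) / S) * y) =
      (2 * σ0 * (A - B) * (L ^ 2 - B) + (2 * σ0 + 6 * σ1) * (2 * σ1 * y) ^ 2) /
        (4 * σ1 * L * S) := by
  rw [hL2]
  field_simp
  linear_combination (4 * (σ0 + σ1)) * hS2

private lemma fderiv_lam1_eq (c1 c2 σ0 σ1 : ℝ) (Φ : Fin 4 → ℝ)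
    (hD : ΔF c1 c2 σ0 σ1 Φ ≠ 0) (hDpos : 0 ≤ ΔF c1 c2 σ0 σ1 Φ)
    (hU : (aF c1 σ0 Φ + bF c2 σ1 Φ + Real.sqrt (ΔF c1 c2 σ0 σ1 Φ)) / 2 ≠ 0)
    (v : Fin 4 → ℝ) :
    fderiv ℝ (lam1 c1 c2 σ0 σ1) Φ v =
      (1 / (2 * lam1 c1 c2 σ0 σ1 Φ)) *
        (((σ0 + σ1) + (aF c1 σ0 Φ - bF c2 σ1 Φ) * (σ0 - σ1) / Real.sqrt (ΔF c1 c2 σ0 σ1 Φ)) * v 0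
          + (4 * σ1 * cF σ1 Φ / Real.sqrt (ΔF c1 c2 σ0 σ1 Φ)) * v 1) := by
  have hA : HasFDerivAt (aF c1 σ0)
      ((2 * σ0) • ContinuousLinearMap.proj (R := ℝ) (φ := fun _ : Fin 4 => ℝ) 0) Φ :=
    (((ContinuousLinearMap.proj (R := ℝ) (φ := fun _ : Fin 4 => ℝ) 0).hasFDerivAt
      (x := Φ)).const_mul (2 * σ0)).const_add (c1 ^ 2)
  have hB : HasFDerivAt (bF c2 σ1)
      ((2 * σ1) • ContinuousLinearMap.proj (R := ℝ) (φ := fun _ : Fin 4 => ℝ) 0) Φ :=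
    (((ContinuousLinearMap.proj (R := ℝ) (φ := fun _ : Fin 4 => ℝ) 0).hasFDerivAt
      (x := Φ)).const_mul (2 * σ1)).const_add (c2 ^ 2)
  have hC : HasFDerivAt (cF σ1)
      ((2 * σ1) • ContinuousLinearMap.proj (R := ℝ) (φ := fun _ : Fin 4 => ℝ) 1) Φ :=
    ((ContinuousLinearMap.proj (R := ℝ) (φ := fun _ : Fin 4 => ℝ) 1).hasFDerivAt
      (x := Φ)).const_mul (2 * σ1)
  have hAB := hA.sub hB
  have h1 := hAB.mul hAB
  have h2 := (hC.mul hC).const_mul (4:ℝ)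
  have hDd := h1.add h2
  have hDval : (aF c1 σ0 Φ - bF c2 σ1 Φ) * (aF c1 σ0 Φ - bF c2 σ1 Φ)
      + 4 * (cF σ1 Φ * cF σ1 Φ) = ΔF c1 c2 σ0 σ1 Φ := by unfold ΔF; ring
  have hS := hDd.sqrt (by
    show (aF c1 σ0 Φ - bF c2 σ1 Φ) * (aF c1 σ0 Φ - bF c2 σ1 Φ) + 4 * (cF σ1 Φ * cF σ1 Φ) ≠ 0
    rw [hDval]; exact hD)
  have hUd := ((hA.add hB).add hS).mul_const ((2:ℝ)⁻¹)
  have hUne : (aF c1 σ0 Φ + bF c2 σ1 Φ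
      + Real.sqrt ((aF c1 σ0 Φ - bF c2 σ1 Φ) * (aF c1 σ0 Φ - bF c2 σ1 Φ)
        + 4 * (cF σ1 Φ * cF σ1 Φ))) * (2:ℝ)⁻¹ ≠ 0 := by
    rw [hDval, ← div_eq_mul_inv]; exact hU
  have hL := hUd.sqrt hUne
  have hfun : lam1 c1 c2 σ0 σ1 = (fun Ψ =>
      Real.sqrt ((aF c1 σ0 Ψ + bF c2 σ1 Ψ
        + Real.sqrt ((aF c1 σ0 Ψ - bF c2 σ1 Ψ) * (aF c1 σ0 Ψ - bF c2 σ1 Ψ)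
          + 4 * (cF σ1 Ψ * cF σ1 Ψ))) * (2:ℝ)⁻¹)) := by
    funext Ψ; unfold lam1; rw [div_eq_mul_inv]
    congr 2
    · unfold ΔF; ring
  rw [hfun]; erw [hL.fderiv]
  have hlam : lam1 c1 c2 σ0 σ1 Φ = Real.sqrt ((aF c1 σ0 Φ + bF c2 σ1 Φ
        + Real.sqrt ((aF c1 σ0 Φ - bF c2 σ1 Φ) * (aF c1 σ0 Φ - bF c2 σ1 Φ)
          + 4 * (cF σ1 Φ * cF σ1 Φ))) * (2:ℝ)⁻¹) := by rw [hfun]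
  simp only [ContinuousLinearMap.smul_apply, ContinuousLinearMap.add_apply,
    ContinuousLinearMap.sub_apply, ContinuousLinearMap.coe_smul', Pi.smul_apply,
    ContinuousLinearMap.proj_apply, smul_eq_mul, Pi.add_apply, Pi.sub_apply, Pi.mul_apply,
    ← hlam, hDval]
  have hSne : Real.sqrt (ΔF c1 c2 σ0 σ1 Φ) ≠ 0 :=
    Real.sqrt_ne_zero'.mpr (lt_of_le_of_ne hDpos (Ne.symm hD))
  field_simp
  ring

private lemma calc_at (c1 c2 σ0 σ1 : ℝ) (hσ1 : σ1 ≠ 0) (Φ : Fin 4 → ℝ)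
    (hb : 0 < bF c2 σ1 Φ) (hab : bF c2 σ1 Φ < aF c1 σ0 Φ) :
    fderiv ℝ (lam1 c1 c2 σ0 σ1) Φ (r1 c1 c2 σ0 σ1 Φ) =
      (2 * σ0 * (aF c1 σ0 Φ - bF c2 σ1 Φ) * (lam1 c1 c2 σ0 σ1 Φ ^ 2 - bF c2 σ1 Φ) +
          (2 * σ0 + 6 * σ1) * cF σ1 Φ ^ 2) /
        (4 * σ1 * lam1 c1 c2 σ0 σ1 Φ * Real.sqrt (ΔF c1 c2 σ0 σ1 Φ)) ∧
    fderiv ℝ (lam4 c1 c2 σ0 σ1) Φ (r4 c1 c2 σ0 σ1 Φ) =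
      -(fderiv ℝ (lam1 c1 c2 σ0 σ1) Φ (r1 c1 c2 σ0 σ1 Φ)) := by
  have hDpos : 0 < ΔF c1 c2 σ0 σ1 Φ := by
    unfold ΔF; nlinarith [sq_nonneg (cF σ1 Φ), sq_nonneg (aF c1 σ0 Φ - bF c2 σ1 Φ)]
  have hSpos : 0 < Real.sqrt (ΔF c1 c2 σ0 σ1 Φ) := Real.sqrt_pos.mpr hDpos
  have hSge : aF c1 σ0 Φ - bF c2 σ1 Φ ≤ Real.sqrt (ΔF c1 c2 σ0 σ1 Φ) := by
    have h0 : aF c1 σ0 Φ - bF c2 σ1 Φ = Real.sqrt ((aF c1 σ0 Φ - bF c2 σ1 Φ) ^ 2) :=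
      (Real.sqrt_sq (by linarith)).symm
    rw [h0]
    apply Real.sqrt_le_sqrt
    unfold ΔF; nlinarith [sq_nonneg (cF σ1 Φ)]
  have hUpos : 0 < (aF c1 σ0 Φ + bF c2 σ1 Φ + Real.sqrt (ΔF c1 c2 σ0 σ1 Φ)) / 2 := by
    linarith
  have hLpos : 0 < lam1 c1 c2 σ0 σ1 Φ := Real.sqrt_pos.mpr hUpos
  have hL2 : lam1 c1 c2 σ0 σ1 Φ ^ 2
      = (aF c1 σ0 Φ + bF c2 σ1 Φ + Real.sqrt (ΔF c1 c2 σ0 σ1 Φ)) / 2 :=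
    Real.sq_sqrt hUpos.le
  have hS2 : Real.sqrt (ΔF c1 c2 σ0 σ1 Φ) ^ 2
      = (aF c1 σ0 Φ - bF c2 σ1 Φ) ^ 2 + 4 * (2 * σ1 * Φ 1) ^ 2 := by
    rw [Real.sq_sqrt hDpos.le]; unfold ΔF cF; ring
  constructor
  · rw [fderiv_lam1_eq c1 c2 σ0 σ1 Φ hDpos.ne' hDpos.le hUpos.ne' (r1 c1 c2 σ0 σ1 Φ)]
    simp only [r1, Matrix.cons_val_zero, Matrix.cons_val_one, Matrix.head_cons, cF]
    exact key_identity σ0 σ1 (aF c1 σ0 Φ) (bF c2 σ1 Φ) (Real.sqrt (ΔF c1 c2 σ0 σ1 Φ))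
      (lam1 c1 c2 σ0 σ1 Φ) (Φ 1) hσ1 hSpos.ne' hLpos.ne' hL2 hS2
  · have h4 : lam4 c1 c2 σ0 σ1 = fun Ψ => -(lam1 c1 c2 σ0 σ1 Ψ) := rfl
    rw [h4, fderiv_fun_neg, ContinuousLinearMap.neg_apply, neg_inj,
      fderiv_lam1_eq c1 c2 σ0 σ1 Φ hDpos.ne' hDpos.le hUpos.ne' (r4 c1 c2 σ0 σ1 Φ),
      fderiv_lam1_eq c1 c2 σ0 σ1 Φ hDpos.ne' hDpos.le hUpos.ne' (r1 c1 c2 σ0 σ1 Φ)]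
    simp only [r1, r4, Matrix.cons_val_zero, Matrix.cons_val_one, Matrix.head_cons]

/-- The genuine-nonlinearity coefficient of the first field:
for `|Φ| < 2κ`, `c¹₁₁(Φ) = ∇λ₁ · r₁ = (2σ₀(a-b)(λ₁²-b) + (2σ₀+6σ₁)c²)/(4σ₁λ₁√Δ)` and
`c⁴₄₄(Φ) = ∇λ₄ · r₄ = -c¹₁₁(Φ)`; at `Φ = 0`, `c¹₁₁(0) = σ₀(c₁²-c₂²)/(2σ₁c₁) ≠ 0`
whenever `σ₀σ₁ ≠ 0`. -/
theorem genuine_nonlinearity_first_field (c1 c2 σ0 σ1 : ℝ)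
    (hc2 : 0 < c2) (hc12 : c2 < c1) (hσ1 : σ1 ≠ 0) :
    ∃ κ > (0:ℝ),
      (∀ Φ : Fin 4 → ℝ, eucNorm4 Φ < 2 * κ →
        fderiv ℝ (lam1 c1 c2 σ0 σ1) Φ (r1 c1 c2 σ0 σ1 Φ) =
          (2 * σ0 * (aF c1 σ0 Φ - bF c2 σ1 Φ) * (lam1 c1 c2 σ0 σ1 Φ ^ 2 - bF c2 σ1 Φ) +
              (2 * σ0 + 6 * σ1) * cF σ1 Φ ^ 2) /
            (4 * σ1 * lam1 c1 c2 σ0 σ1 Φ * Real.sqrt (ΔF c1 c2 σ0 σ1 Φ)) ∧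
        fderiv ℝ (lam4 c1 c2 σ0 σ1) Φ (r4 c1 c2 σ0 σ1 Φ) =
          -(fderiv ℝ (lam1 c1 c2 σ0 σ1) Φ (r1 c1 c2 σ0 σ1 Φ))) ∧
      fderiv ℝ (lam1 c1 c2 σ0 σ1) 0 (r1 c1 c2 σ0 σ1 0) =
        σ0 * (c1 ^ 2 - c2 ^ 2) / (2 * σ1 * c1) ∧
      (σ0 * σ1 ≠ 0 → fderiv ℝ (lam1 c1 c2 σ0 σ1) 0 (r1 c1 c2 σ0 σ1 0) ≠ 0) := by
  have hc1 : 0 < c1 := hc2.trans hc12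
  have hY : 0 < c1 ^ 2 - c2 ^ 2 := by nlinarith
  set M : ℝ := 1 + |σ0| + |σ1| with hM_def
  have hM : 0 < M := by positivity
  set κ : ℝ := min (c2 ^ 2) (c1 ^ 2 - c2 ^ 2) / (8 * M) with hκ_def
  have hκ : 0 < κ := by
    apply div_pos (lt_min (by positivity) hY) (by positivity)
  have hκle1 : 8 * M * κ ≤ c2 ^ 2 := by
    rw [hκ_def, mul_comm, div_mul_cancel₀ _ (by positivity : (8:ℝ) * M ≠ 0)]
    exact min_le_left _ _
  have hκle2 : 8 * M * κ ≤ c1 ^ 2 - c2 ^ 2 := by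
    rw [hκ_def, mul_comm, div_mul_cancel₀ _ (by positivity : (8:ℝ) * M ≠ 0)]
    exact min_le_right _ _
  have hball : ∀ Φ : Fin 4 → ℝ, eucNorm4 Φ < 2 * κ →
      0 < bF c2 σ1 Φ ∧ bF c2 σ1 Φ < aF c1 σ0 Φ := by
    intro Φ hΦ
    have hx : |Φ 0| < 2 * κ := lt_of_le_of_lt (abs_le_eucNorm4 Φ 0) hΦ
    have hb0 : |σ0| * |Φ 0| ≤ |σ0| * (2 * κ) :=
      mul_le_mul_of_nonneg_left hx.le (abs_nonneg _)
    have hb1 : |σ1| * |Φ 0| ≤ |σ1| * (2 * κ) :=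
      mul_le_mul_of_nonneg_left hx.le (abs_nonneg _)
    have hm0 : |σ0| * (2 * κ) ≤ (M - 1) * (2 * κ) := by
      apply mul_le_mul_of_nonneg_right _ (by positivity)
      rw [hM_def]; have := abs_nonneg σ1; linarith
    have hm1 : |σ1| * (2 * κ) ≤ (M - 1) * (2 * κ) := by
      apply mul_le_mul_of_nonneg_right _ (by positivity)
      rw [hM_def]; have := abs_nonneg σ0; linarith
    have e0 : -(|σ0| * |Φ 0|) ≤ σ0 * Φ 0 ∧ σ0 * Φ 0 ≤ |σ0| * |Φ 0| := by
      rw [← abs_mul]; exact ⟨neg_abs_le _, le_abs_self _⟩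
    have e1 : -(|σ1| * |Φ 0|) ≤ σ1 * Φ 0 ∧ σ1 * Φ 0 ≤ |σ1| * |Φ 0| := by
      rw [← abs_mul]; exact ⟨neg_abs_le _, le_abs_self _⟩
    constructor
    · unfold bF; nlinarith [e1.1, hb1, hm1, hκle1, hκ, hM]
    · unfold aF bF; nlinarith [e0.1, e1.2, hb0, hb1, hm0, hm1, hκle2, hκ, hM]
  have hval : fderiv ℝ (lam1 c1 c2 σ0 σ1) 0 (r1 c1 c2 σ0 σ1 0) =
      σ0 * (c1 ^ 2 - c2 ^ 2) / (2 * σ1 * c1) := by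
    have h00 : eucNorm4 (0 : Fin 4 → ℝ) < 2 * κ := by
      unfold eucNorm4; simp; positivity
    have hb0 : 0 < bF c2 σ1 0 ∧ bF c2 σ1 0 < aF c1 σ0 0 := hball 0 h00
    rw [(calc_at c1 c2 σ0 σ1 hσ1 0 hb0.1 hb0.2).1]
    have hΔ0 : ΔF c1 c2 σ0 σ1 0 = (c1 ^ 2 - c2 ^ 2) ^ 2 := by
      unfold ΔF aF bF cF; simp
    have hsq : Real.sqrt (ΔF c1 c2 σ0 σ1 0) = c1 ^ 2 - c2 ^ 2 := by
      rw [hΔ0, Real.sqrt_sq hY.le]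
    have hlam0 : lam1 c1 c2 σ0 σ1 0 = c1 := by
      unfold lam1
      rw [hsq]
      rw [show (aF c1 σ0 0 + bF c2 σ1 0 + (c1 ^ 2 - c2 ^ 2)) / 2 = c1 ^ 2 by
        unfold aF bF; simp]
      exact Real.sqrt_sq hc1.le
    rw [hsq, hlam0]
    unfold aF bF cF
    simp only [Pi.zero_apply, mul_zero]
    field_simp
    ring
  refine ⟨κ, hκ, fun Φ hΦ => calc_at c1 c2 σ0 σ1 hσ1 Φ (hball Φ hΦ).1 (hball Φ hΦ).2,
    hval, fun hσ0σ1 => ?_⟩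
  rw [hval]
  have hσ0 : σ0 ≠ 0 := fun h0 => hσ0σ1 (by rw [h0]; ring)
  exact div_ne_zero (mul_ne_zero hσ0 hY.ne')
    (mul_ne_zero (mul_ne_zero two_ne_zero hσ1) hc1.ne')

end ElasticIP
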